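/- Let (ε_n) and (Θ_n) be sequences of nonnegative reals satisfying ε_{n+1} ≤ K·c^n·(1+Θ_n)^7 ε_n² and |Θ_{n+1} - Θ_n| ≤ K·c^n·(1+Θ_n)^7 ε_n Θ_n for all n ≥ 0, where K ≥ 1, c > 1. Then there exists ε* > 0, depending only on K, c, Θ_0, such that if ε_0 ≤ ε*, then for all n: ε_n ≤ ε_0 e^{-(3/2)^n + 1} and Θ_n ≤ 2Θ_0. -/

import Mathlib

/-- Abstract quadratic-convergence (KAM/Newton) iteration lemma: if
ε_{n+1} ≤ K cⁿ (1+Θ_n)⁷ ε_n² and |Θ_{n+1} - Θ_n| ≤ K cⁿ (1+Θ_n)⁷ ε_n Θ_n, then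
for ε₀ small enough (depending only on K, c, Θ₀ = B) one has superexponential
decay ε_n ≤ ε₀ e^{-(3/2)ⁿ + 1} and Θ_n ≤ 2Θ₀. -/
theorem stmt16 (K c B : ℝ) (hK : 1 ≤ K) (hc : 1 < c) (hB : 0 ≤ B) :
    ∃ εstar > (0 : ℝ), ∀ ε Θ : ℕ → ℝ,
      (∀ n, 0 ≤ ε n) → (∀ n, 0 ≤ Θ n) → Θ 0 = B →
      (∀ n, ε (n + 1) ≤ K * c ^ n * (1 + Θ n) ^ 7 * (ε n) ^ 2) →
      (∀ n, |Θ (n + 1) - Θ n| ≤ K * c ^ n * (1 + Θ n) ^ 7 * ε n * Θ n) →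
      ε 0 ≤ εstar →
      ∀ n, ε n ≤ ε 0 * Real.exp (-(3 / 2 : ℝ) ^ n + 1) ∧ Θ n ≤ 2 * B := by
  set M : ℝ := K * (1 + 2 * B) ^ 7 with hMdef
  have hB2 : (1 : ℝ) ≤ 1 + 2 * B := by linarith
  have hpow7 : (1 : ℝ) ≤ (1 + 2 * B) ^ 7 := one_le_pow₀ hB2
  have hM1 : 1 ≤ M :=
    calc (1 : ℝ) = 1 * 1 := by ring
    _ ≤ K * (1 + 2 * B) ^ 7 := mul_le_mul hK hpow7 zero_le_one (by linarith)
  have hc0 : (0 : ℝ) < c := by linarith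
  have hMc0 : (0 : ℝ) < M * c := by positivity
  refine ⟨Real.exp (-2) / (M * c), by positivity, ?_⟩
  intro ε Θ hε hΘ hΘ0 hrecε hrecΘ hε0 n
  set δ0 : ℝ := M * c * ε 0 with hδ0
  have hδ0nn : 0 ≤ δ0 := by
    have := hε 0; positivity
  have hδ0le : δ0 ≤ Real.exp (-2) := by
    rw [le_div_iff₀ hMc0] at hε0
    rw [hδ0]; nlinarith
  -- auxiliary: δ0 ^ (2^k) ≤ (1/2)^(k+2)
  have hsmall : ∀ k : ℕ, δ0 ^ (2 ^ k) ≤ (1 / 2 : ℝ) ^ (k + 2) := by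
    intro k
    have h1' : δ0 ^ (2 ^ k) ≤ Real.exp (-2) ^ (2 ^ k) :=
      pow_le_pow_left₀ hδ0nn hδ0le _
    have h2' : Real.exp (-2) ^ (2 ^ k) = Real.exp (-(2 * 2 ^ k : ℝ)) := by
      rw [← Real.exp_nat_mul]; push_cast; ring_nf
    have ht : (1 : ℝ) ≤ (2 : ℝ) ^ k := one_le_pow₀ one_le_two
    have hexp : (4 : ℝ) * 2 ^ k ≤ Real.exp (2 * 2 ^ k) := by
      have h3 : ((2 : ℝ) ^ k + 1) ≤ Real.exp ((2 : ℝ) ^ k) :=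
        Real.add_one_le_exp _
      have h4 : Real.exp (2 * 2 ^ k) = Real.exp ((2:ℝ) ^ k) * Real.exp ((2:ℝ) ^ k) := by
        rw [← Real.exp_add]; ring_nf
      nlinarith [Real.exp_pos ((2:ℝ) ^ k)]
    have h5 : Real.exp (-(2 * 2 ^ k : ℝ)) ≤ 1 / (4 * 2 ^ k) := by
      rw [Real.exp_neg]
      rw [inv_eq_one_div]
      apply one_div_le_one_div_of_le (by positivity) hexp
    have h6 : (1 / (4 * 2 ^ k) : ℝ) = (1 / 2 : ℝ) ^ (k + 2) := by
      rw [div_pow, one_pow, pow_add]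
      norm_num
      rw [mul_comm]
    calc δ0 ^ (2 ^ k) ≤ Real.exp (-(2 * 2 ^ k : ℝ)) := h2' ▸ h1'
    _ ≤ 1 / (4 * 2 ^ k) := h5
    _ = (1 / 2 : ℝ) ^ (k + 2) := h6
  -- the key induction
  have key : ∀ m, M * c ^ (m + 1) * ε m ≤ δ0 ^ (2 ^ m) ∧
      Θ m ≤ B * (2 - (1 / 2 : ℝ) ^ m) := by
    intro m
    induction m with
    | zero =>
      constructor
      · apply le_of_eq
        rw [hδ0]; norm_num
      · rw [hΘ0]; norm_num
    | succ k ih =>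
      obtain ⟨h1, h2⟩ := ih
      have hhalf : (0 : ℝ) ≤ (1 / 2 : ℝ) ^ k := by positivity
      have hΘ2B : Θ k ≤ 2 * B := by nlinarith
      have hpown : (1 + Θ k) ^ 7 ≤ (1 + 2 * B) ^ 7 :=
        pow_le_pow_left₀ (by linarith [hΘ k]) (by linarith) 7
      have hcn : (0 : ℝ) < c ^ k := by positivity
      have hcn1 : (1 : ℝ) ≤ c ^ k := one_le_pow₀ (le_of_lt hc)
      -- ε step
      have hεM : ε (k + 1) ≤ M * c ^ k * (ε k) ^ 2 := by
        calc ε (k + 1) ≤ K * c ^ k * (1 + Θ k) ^ 7 * (ε k) ^ 2 := hrecε k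
        _ ≤ K * (1 + 2 * B) ^ 7 * c ^ k * (ε k) ^ 2 := by
            have hεsq : (0 : ℝ) ≤ (ε k) ^ 2 := sq_nonneg _
            have : K * c ^ k * (1 + Θ k) ^ 7 ≤ K * (1 + 2 * B) ^ 7 * c ^ k := by
              have hK0 : (0 : ℝ) ≤ K := by linarith
              calc K * c ^ k * (1 + Θ k) ^ 7 ≤ K * c ^ k * (1 + 2 * B) ^ 7 := by
                    apply mul_le_mul_of_nonneg_left hpown (by positivity)
              _ = K * (1 + 2 * B) ^ 7 * c ^ k := by ring
            exact mul_le_mul_of_nonneg_right this hεsq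
        _ = M * c ^ k * (ε k) ^ 2 := by rw [hMdef]
      constructor
      · -- M c^{k+2} ε_{k+1} ≤ δ0^{2^{k+1}}
        have step : M * c ^ (k + 1 + 1) * ε (k + 1) ≤ (M * c ^ (k + 1) * ε k) ^ 2 := by
          have hpos : (0 : ℝ) ≤ M * c ^ (k + 1 + 1) := by positivity
          calc M * c ^ (k + 1 + 1) * ε (k + 1)
              ≤ M * c ^ (k + 1 + 1) * (M * c ^ k * (ε k) ^ 2) :=
                mul_le_mul_of_nonneg_left hεM hpos
          _ = (M * c ^ (k + 1) * ε k) ^ 2 := by ring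
        calc M * c ^ (k + 1 + 1) * ε (k + 1) ≤ (M * c ^ (k + 1) * ε k) ^ 2 := step
        _ ≤ (δ0 ^ (2 ^ k)) ^ 2 := by
            exact pow_le_pow_left₀ (mul_nonneg (by positivity) (hε k)) h1 2
        _ = δ0 ^ (2 ^ (k + 1)) := by rw [← pow_mul, ← pow_succ]
      · -- Θ step
        have hd : Θ (k + 1) ≤ Θ k + M * c ^ k * ε k * Θ k := by
          have habs := hrecΘ k
          have hb : K * c ^ k * (1 + Θ k) ^ 7 * ε k * Θ k ≤ M * c ^ k * ε k * Θ k := by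
            have : K * c ^ k * (1 + Θ k) ^ 7 ≤ M * c ^ k := by
              calc K * c ^ k * (1 + Θ k) ^ 7 ≤ K * c ^ k * (1 + 2 * B) ^ 7 :=
                    mul_le_mul_of_nonneg_left hpown (by positivity)
              _ = M * c ^ k := by rw [hMdef]; ring
            have := mul_le_mul_of_nonneg_right this (hε k)
            exact mul_le_mul_of_nonneg_right this (hΘ k)
          have := abs_le.1 habs
          linarith
        have hMcε : M * c ^ k * ε k ≤ δ0 ^ (2 ^ k) := by
          have : M * c ^ k * ε k ≤ M * c ^ (k + 1) * ε k := by
            have : c ^ k ≤ c ^ (k + 1) :=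
              pow_le_pow_right₀ (le_of_lt hc) (Nat.le_succ k)
            have hεk := hε k
            calc M * c ^ k * ε k = M * (c ^ k * ε k) := by ring
            _ ≤ M * (c ^ (k + 1) * ε k) :=
                mul_le_mul_of_nonneg_left
                  (mul_le_mul_of_nonneg_right this hεk) (by linarith)
            _ = M * c ^ (k + 1) * ε k := by ring
          linarith
        have hterm : M * c ^ k * ε k * Θ k ≤ 2 * B * (1 / 2 : ℝ) ^ (k + 2) := by
          have h0 : 0 ≤ M * c ^ k * ε k := mul_nonneg (by positivity) (hε k)
          calc M * c ^ k * ε k * Θ k ≤ M * c ^ k * ε k * (2 * B) :=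
                mul_le_mul_of_nonneg_left hΘ2B h0
          _ ≤ δ0 ^ (2 ^ k) * (2 * B) := by
              apply mul_le_mul_of_nonneg_right hMcε (by linarith)
          _ ≤ (1 / 2 : ℝ) ^ (k + 2) * (2 * B) := by
              apply mul_le_mul_of_nonneg_right (hsmall k) (by linarith)
          _ = 2 * B * (1 / 2 : ℝ) ^ (k + 2) := by ring
        have heq : B * (2 - (1 / 2 : ℝ) ^ k) + 2 * B * (1 / 2 : ℝ) ^ (k + 2)
            = B * (2 - (1 / 2 : ℝ) ^ (k + 1)) := by
          rw [pow_succ, pow_succ]; ring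
        linarith
  -- conclusion
  obtain ⟨h1, h2⟩ := key n
  have hhalf : (0 : ℝ) ≤ (1 / 2 : ℝ) ^ n := by positivity
  refine ⟨?_, by nlinarith⟩
  -- from h1 : M c^{n+1} ε n ≤ δ0^{2^n}
  have h2n : 2 ^ n = (2 ^ n - 1) + 1 := (Nat.succ_pred_eq_of_pos (by positivity)).symm
  have hsplit : δ0 ^ (2 ^ n) = δ0 ^ (2 ^ n - 1) * δ0 := by
    conv_lhs => rw [h2n]
    rw [pow_succ]
  have hcn1 : (1 : ℝ) ≤ c ^ n := one_le_pow₀ (le_of_lt hc)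
  have hεn : ε n ≤ ε 0 * δ0 ^ (2 ^ n - 1) := by
    have hA : M * c * (c ^ n * ε n) ≤ M * c * (ε 0 * δ0 ^ (2 ^ n - 1)) := by
      calc M * c * (c ^ n * ε n) = M * c ^ (n + 1) * ε n := by ring
      _ ≤ δ0 ^ (2 ^ n) := h1
      _ = δ0 ^ (2 ^ n - 1) * δ0 := hsplit
      _ = M * c * (ε 0 * δ0 ^ (2 ^ n - 1)) := by rw [hδ0]; ring
    have hB' : c ^ n * ε n ≤ ε 0 * δ0 ^ (2 ^ n - 1) :=
      le_of_mul_le_mul_left (by linarith) hMc0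
    have : ε n ≤ c ^ n * ε n := by nlinarith [hε n]
    linarith
  have hexp : δ0 ^ (2 ^ n - 1) ≤ Real.exp (-(3 / 2 : ℝ) ^ n + 1) := by
    calc δ0 ^ (2 ^ n - 1) ≤ Real.exp (-2) ^ (2 ^ n - 1) :=
          pow_le_pow_left₀ hδ0nn hδ0le _
    _ = Real.exp (-2 * ((2 ^ n - 1 : ℕ) : ℝ)) := by
        rw [← Real.exp_nat_mul]; ring_nf
    _ ≤ Real.exp (-(3 / 2 : ℝ) ^ n + 1) := by
        apply Real.exp_le_exp.2
        have hcast : ((2 ^ n - 1 : ℕ) : ℝ) = 2 ^ n - 1 := by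
          rw [Nat.cast_sub (Nat.one_le_two_pow)]; push_cast; ring
        rw [hcast]
        have h32 : (3 / 2 : ℝ) ^ n ≤ 2 ^ n :=
          pow_le_pow_left₀ (by norm_num) (by norm_num) n
        have h21 : (1 : ℝ) ≤ 2 ^ n := one_le_pow₀ one_le_two
        linarith
  calc ε n ≤ ε 0 * δ0 ^ (2 ^ n - 1) := hεn
  _ ≤ ε 0 * Real.exp (-(3 / 2 : ℝ) ^ n + 1) :=
      mul_le_mul_of_nonneg_left hexp (hε 0)
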